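/- arXiv:2101.00801 — 4 statements merged into one kernel-verified Lean document; each statement's English description precedes it below -/
import Mathlib

section
/- Let f : ℕ → (0,∞) satisfy f(n) = O(n^{-∞}). Then there exists a function g : ℕ → (0,∞) with f(n) ≤ g(n) for all n, g monotonically decreasing, g(n) = O(n^{-∞}), and g reproducing in the sense that sup_{j,k ∈ ℤ} Σ_{l ∈ ℤ} g(|j-l|)·g(|l-k|) / g(|j-k|) < ∞. -/
open Real

/-- set of values of decompositions of `n` into parts `≥ 1` -/
def stmt7vset (U : ℕ → ℝ) (n : ℕ) : Set ℝ :=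
  (fun l : List ℕ => (l.map U).sum) '' {l : List ℕ | l.sum = n ∧ ∀ x ∈ l, 1 ≤ x}

noncomputable def stmt7v (U : ℕ → ℝ) (n : ℕ) : ℝ := sInf (stmt7vset U n)

lemma stmt7vset_nonempty (U : ℕ → ℝ) (n : ℕ) : (stmt7vset U n).Nonempty := by
  rcases n with _ | n
  · exact ⟨0, ⟨[], ⟨rfl, by simp⟩, by simp⟩⟩
  · exact ⟨U (n+1), ⟨[n+1], ⟨by simp, by simp⟩, by simp⟩⟩

lemma stmt7vset_bdd (U : ℕ → ℝ) (hU1 : ∀ n, 1 ≤ U n) (n : ℕ) :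
    BddBelow (stmt7vset U n) := by
  refine ⟨0, fun x hx => ?_⟩
  obtain ⟨l, ⟨-, -⟩, rfl⟩ := hx
  exact List.sum_nonneg (by
    intro y hy
    obtain ⟨a, -, rfl⟩ := List.mem_map.mp hy
    linarith [hU1 a])

lemma stmt7v_nonneg (U : ℕ → ℝ) (hU1 : ∀ n, 1 ≤ U n) (n : ℕ) : 0 ≤ stmt7v U n := by
  refine le_csInf (stmt7vset_nonempty U n) ?_
  rintro x ⟨l, ⟨-, -⟩, rfl⟩
  exact List.sum_nonneg (by
    intro y hy
    obtain ⟨a, -, rfl⟩ := List.mem_map.mp hy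
    linarith [hU1 a])

lemma stmt7v_zero (U : ℕ → ℝ) (hU1 : ∀ n, 1 ≤ U n) : stmt7v U 0 = 0 := by
  have h : stmt7vset U 0 = {0} := by
    ext x
    constructor
    · rintro ⟨l, ⟨hsum, hparts⟩, rfl⟩
      rcases l with _ | ⟨a, t⟩
      · simp
      · exfalso
        have ha : 1 ≤ a := hparts a (by simp)
        have : a ≤ (a :: t).sum := List.single_le_sum (by simp) a (by simp)
        omega
    · rintro rfl
      exact ⟨[], ⟨rfl, by simp⟩, by simp⟩
  rw [stmt7v, h, csInf_singleton]

lemma stmt7v_le (U : ℕ → ℝ) (hU1 : ∀ n, 1 ≤ U n) (n : ℕ) (hn : 1 ≤ n) :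
    stmt7v U n ≤ U n :=
  csInf_le (stmt7vset_bdd U hU1 n) ⟨[n], ⟨by simp, by intro x hx; simp at hx; omega⟩, by simp⟩

lemma stmt7v_subadd (U : ℕ → ℝ) (hU1 : ∀ n, 1 ≤ U n) (a b : ℕ) :
    stmt7v U (a + b) ≤ stmt7v U a + stmt7v U b := by
  have key : ∀ x ∈ stmt7vset U a, ∀ y ∈ stmt7vset U b, stmt7v U (a + b) ≤ x + y := by
    rintro x ⟨l₁, ⟨h1, h1'⟩, rfl⟩ y ⟨l₂, ⟨h2, h2'⟩, rfl⟩
    refine csInf_le (stmt7vset_bdd U hU1 _) ⟨l₁ ++ l₂, ⟨by simp [h1, h2], ?_⟩, by simp⟩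
    intro x hx
    rcases List.mem_append.mp hx with h | h
    · exact h1' x h
    · exact h2' x h
  have h1 : stmt7v U (a + b) - stmt7v U b ≤ stmt7v U a := by
    refine le_csInf (stmt7vset_nonempty U a) (fun x hx => ?_)
    have h2 : stmt7v U (a + b) - x ≤ stmt7v U b :=
      le_csInf (stmt7vset_nonempty U b) (fun y hy => by linarith [key x hx y hy])
    linarith
  linarith

/-- existence of a maximum element in a nonempty list of naturals -/
lemma stmt7_list_max (l : List ℕ) (hl : l ≠ []) : ∃ a ∈ l, ∀ b ∈ l, b ≤ a := by
  induction l with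
  | nil => simp at hl
  | cons x t ih =>
    rcases t with _ | ⟨y, t'⟩
    · exact ⟨x, by simp, by simp⟩
    · obtain ⟨a, ha, hmax⟩ := ih (by simp)
      rcases le_total x a with h | h
      · exact ⟨a, by simp [ha], by
          intro b hb
          rcases List.mem_cons.mp hb with rfl | hb
          · exact h
          · exact hmax b hb⟩
      · refine ⟨x, by simp, ?_⟩
        intro b hb
        rcases List.mem_cons.mp hb with rfl | hb
        · exact le_refl _
        · exact (hmax b hb).trans h

lemma stmt7v_lower (U : ℕ → ℝ) (hU1 : ∀ n, 1 ≤ U n) (m : ℕ) (D : ℝ) (hD : 0 ≤ D)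
    (hU2 : ∀ a : ℕ, 1 ≤ a → 2 * (m : ℝ) * Real.log a - D ≤ U a) :
    ∀ n : ℕ, 1 ≤ n →
      (m : ℝ) * Real.log n - (2 * (m : ℝ) * Real.log (4 * m) + D) ≤ stmt7v U n := by
  intro n hn
  set E : ℝ := 2 * (m : ℝ) * Real.log (4 * m) + D with hE
  have hE0 : 0 ≤ E := by
    have : 0 ≤ 2 * (m : ℝ) * Real.log (4 * m) := by
      rcases Nat.eq_zero_or_pos m with rfl | hm
      · simp
      · have h1 : (1 : ℝ) ≤ 4 * m := by
          have : (1:ℝ) ≤ (m:ℝ) := by exact_mod_cast hm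
          linarith
        have := Real.log_nonneg h1
        positivity
    linarith
  refine le_csInf (stmt7vset_nonempty U n) ?_
  rintro x ⟨l, ⟨hsum, hparts⟩, rfl⟩
  have hlne : l ≠ [] := by
    rintro rfl
    simp at hsum
    omega
  have hr1 : 1 ≤ l.length := List.length_pos_iff.mpr hlne
  set r : ℕ := l.length with hrdef
  -- x ≥ r
  have hxr : (r : ℝ) ≤ (l.map U).sum := by
    have := List.card_nsmul_le_sum (l.map U) (1 : ℝ) (by
      intro y hy
      obtain ⟨a, -, rfl⟩ := List.mem_map.mp hy
      exact hU1 a)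
    simpa [nsmul_eq_mul] using this
  have hlogn : 0 ≤ Real.log n := Real.log_nonneg (by exact_mod_cast hn)
  rcases le_or_gt ((m : ℝ) * Real.log n) (r : ℝ) with hcase | hcase
  · nlinarith
  · -- r < m log n, so m ≥ 1 and n ≥ 2
    have hr0 : (0 : ℝ) < (r : ℝ) := by exact_mod_cast hr1
    have hmlog : (0 : ℝ) < (m : ℝ) * Real.log n := lt_trans hr0 hcase
    have hm0 : (0 : ℝ) < (m : ℝ) := by
      rcases Nat.eq_zero_or_pos m with rfl | hm
      · simp at hmlog
      · exact_mod_cast hm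
    have hm1 : (1 : ℝ) ≤ (m : ℝ) := by
      have hmne : m ≠ 0 := by rintro rfl; simp at hmlog
      exact_mod_cast Nat.one_le_iff_ne_zero.mpr hmne
    -- max element
    obtain ⟨A, hAl, hAmax⟩ := stmt7_list_max l hlne
    have hA1 : 1 ≤ A := hparts A hAl
    have hA0 : (0 : ℝ) < (A : ℝ) := by exact_mod_cast hA1
    have hn0 : (0 : ℝ) < (n : ℝ) := by exact_mod_cast hn
    -- n ≤ r * A
    have hnrA : (n : ℝ) ≤ (r : ℝ) * (A : ℝ) := by
      have := List.sum_le_card_nsmul l A hAmax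
      rw [hsum] at this  -- careful: hsum : l.sum = n
      exact_mod_cast by simpa [smul_eq_mul] using this
    -- x ≥ U A
    have hxUA : U A ≤ (l.map U).sum := by
      refine List.single_le_sum ?_ (U A) (List.mem_map.mpr ⟨A, hAl, rfl⟩)
      intro y hy
      obtain ⟨a, -, rfl⟩ := List.mem_map.mp hy
      linarith [hU1 a]
    have hUA : 2 * (m : ℝ) * Real.log A - D ≤ U A := hU2 A hA1
    -- log A ≥ log n - log r
    have hlogA : Real.log n - Real.log r ≤ Real.log A := by
      have h1 : (n : ℝ) / r ≤ (A : ℝ) := by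
        rw [div_le_iff₀ hr0]
        linarith [hnrA]
      have h2 : Real.log ((n : ℝ) / r) ≤ Real.log A :=
        Real.log_le_log (by positivity) h1
      rwa [Real.log_div (ne_of_gt hn0) (ne_of_gt hr0)] at h2
    -- log n ≤ 4 n^(1/4)
    have hql : Real.log ((n : ℝ) ^ ((1:ℝ)/4)) = (1/4) * Real.log n :=
      Real.log_rpow hn0 _
    have hq0 : (0 : ℝ) < (n : ℝ) ^ ((1:ℝ)/4) := Real.rpow_pos_of_pos hn0 _
    have hlognq : Real.log n ≤ 4 * (n : ℝ) ^ ((1:ℝ)/4) := by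
      have := Real.log_le_sub_one_of_pos hq0
      rw [hql] at this
      linarith
    -- log r ≤ log (4m) + (1/4) log n
    have hr4m : (r : ℝ) ≤ 4 * (m : ℝ) * (n : ℝ) ^ ((1:ℝ)/4) := by
      calc (r : ℝ) ≤ (m : ℝ) * Real.log n := le_of_lt hcase
        _ ≤ (m : ℝ) * (4 * (n : ℝ) ^ ((1:ℝ)/4)) := by
            exact mul_le_mul_of_nonneg_left hlognq (le_of_lt hm0)
        _ = 4 * (m : ℝ) * (n : ℝ) ^ ((1:ℝ)/4) := by ring
    have hlogr : Real.log r ≤ Real.log (4 * (m : ℝ)) + (1/4) * Real.log n := by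
      have h1 : Real.log r ≤ Real.log (4 * (m : ℝ) * (n : ℝ) ^ ((1:ℝ)/4)) :=
        Real.log_le_log hr0 hr4m
      rwa [Real.log_mul (by positivity) (ne_of_gt hq0), hql] at h1
    -- conclude
    have key : 2 * (m : ℝ) * (Real.log n - Real.log r) - D ≤ (l.map U).sum := by
      have h1 : 2 * (m : ℝ) * (Real.log n - Real.log r) - D ≤ 2 * (m : ℝ) * Real.log A - D := by
        have := mul_le_mul_of_nonneg_left hlogA (by positivity : (0:ℝ) ≤ 2 * (m:ℝ))
        linarith
      linarith [hUA, hxUA]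
    have h2 : 2 * (m:ℝ) * Real.log r ≤ 2 * (m:ℝ) * Real.log (4 * (m:ℝ)) + (m:ℝ)/2 * Real.log n := by
      nlinarith [hlogr, hm0]
    show (m : ℝ) * Real.log n - E ≤ (l.map U).sum
    rw [hE]
    nlinarith [key, h2, mul_nonneg (le_of_lt hm0) hlogn]
noncomputable def stmt7q (n : ℤ) : ℝ := ((1 + (n.natAbs : ℝ))^2)⁻¹

lemma stmt7q_nonneg (n : ℤ) : 0 ≤ stmt7q n := by unfold stmt7q; positivity

lemma stmt7q_summable : Summable stmt7q := by
  have hb : Summable (fun n : ℕ => (((n : ℝ))^2)⁻¹) := Real.summable_nat_pow_inv.mpr one_lt_two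
  have hqnat : Summable (fun n : ℕ => ((1 + (n : ℝ))^2)⁻¹) := by
    have h1 : Summable (fun n : ℕ => ((((n + 1 : ℕ)) : ℝ)^2)⁻¹) := (summable_nat_add_iff 1).mpr hb
    refine h1.congr fun n => ?_
    push_cast
    ring_nf
  apply Summable.of_nat_of_neg
  · refine hqnat.congr fun n => ?_
    simp [stmt7q]
  · refine hqnat.congr fun n => ?_
    simp [stmt7q]
set_option maxHeartbeats 1600000 in
/-- Any positive sequence with `f(n) = O(n^{-∞})` is dominated by a positive,
monotonically decreasing function `g` with `g(n) = O(n^{-∞})` which is reproducing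
for the lattice `ℤ ⊂ ℝ`:
`sup_{j,k ∈ ℤ} Σ_{l ∈ ℤ} g(|j−l|)·g(|l−k|)/g(|j−k|) < ∞`. -/
theorem stmt7 (f : ℕ → ℝ)
    (hpos : ∀ n, 0 < f n)
    (hdecay : ∀ m : ℕ, ∃ C : ℝ, ∀ n : ℕ, 1 ≤ n → f n ≤ C * (n : ℝ) ^ (-(m : ℝ))) :
    ∃ g : ℕ → ℝ,
      (∀ n, 0 < g n) ∧
      (∀ n, f n ≤ g n) ∧
      (∀ n m : ℕ, n ≤ m → g m ≤ g n) ∧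
      (∀ m : ℕ, ∃ C : ℝ, ∀ n : ℕ, 1 ≤ n → g n ≤ C * (n : ℝ) ^ (-(m : ℝ))) ∧
      ∃ B : ℝ, ∀ j k : ℤ,
        Summable (fun l : ℤ => g (j - l).natAbs * g (l - k).natAbs / g (j - k).natAbs) ∧
        (∑' l : ℤ, g (j - l).natAbs * g (l - k).natAbs / g (j - k).natAbs) ≤ B := by
  classical
  obtain ⟨C₃, hC₃⟩ := hdecay 3
  have hC₃pos : 0 < C₃ := by
    have h1 := hC₃ 1 le_rfl
    rw [Nat.cast_one, Real.one_rpow, mul_one] at h1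
    exact lt_of_lt_of_le (hpos 1) h1
  set M : ℝ := max (4 * C₃) (f 0) with hMdef
  have hM0 : 0 < M := lt_of_lt_of_le (hpos 0) (le_max_right _ _)
  have hMf : ∀ n : ℕ, f n * (1 + (n : ℝ))^2 ≤ M := by
    intro n
    rcases Nat.eq_zero_or_pos n with rfl | hn
    · have h0 : f 0 * (1 + ((0:ℕ) : ℝ))^2 = f 0 := by norm_num
      rw [h0, hMdef]
      exact le_max_right _ _
    · have ht : (1 : ℝ) ≤ (n : ℝ) := by exact_mod_cast hn
      have hn0 : (0 : ℝ) < (n : ℝ) := by linarith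
      have h1 := hC₃ n hn
      have hrw : (n : ℝ) ^ (-((3 : ℕ) : ℝ)) = (((n : ℝ))^(3:ℕ))⁻¹ := by
        rw [Real.rpow_neg (le_of_lt hn0), Real.rpow_natCast]
      rw [hrw] at h1
      have h3 : f n * (n : ℝ)^(3:ℕ) ≤ C₃ := by
        rw [← le_div_iff₀ (by positivity)]
        rwa [div_eq_mul_inv]
      have h4 : f n * (1 + (n : ℝ))^2 ≤ 4 * C₃ := by
        nlinarith [hpos n, h3, ht, sq_nonneg ((n:ℝ) - 1), mul_pos (hpos n) hn0]
      exact h4.trans (le_max_left _ _)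
  set U : ℕ → ℝ := fun n => 1 + Real.log M - Real.log (f n * (1 + (n : ℝ))^2) with hUdef
  have hfn2pos : ∀ n : ℕ, 0 < f n * (1 + (n : ℝ))^2 := fun n => by
    have := hpos n; positivity
  have hU1 : ∀ n, 1 ≤ U n := by
    intro n
    have := Real.log_le_log (hfn2pos n) (hMf n)
    simp only [hUdef]
    linarith
  have hvle : ∀ n, stmt7v U n ≤ U n := by
    intro n
    rcases Nat.eq_zero_or_pos n with rfl | hn
    · rw [stmt7v_zero U hU1]; linarith [hU1 0]
    · exact stmt7v_le U hU1 n hn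
  have hv0 : ∀ n, 0 ≤ stmt7v U n := stmt7v_nonneg U hU1
  set eM : ℝ := Real.exp 1 * M with heMdef
  have heM0 : 0 < eM := mul_pos (Real.exp_pos 1) hM0
  set g₁ : ℕ → ℝ := fun n => eM * Real.exp (-(stmt7v U n)) / (1 + (n : ℝ))^2 with hg₁def
  have hg₁pos : ∀ n, 0 < g₁ n := fun n => by
    simp only [hg₁def]
    positivity
  have hg₁le : ∀ n, g₁ n ≤ eM := by
    intro n
    have h1 : Real.exp (-(stmt7v U n)) ≤ 1 := Real.exp_le_one_iff.mpr (by linarith [hv0 n])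
    have h2 : (1 : ℝ) ≤ (1 + (n : ℝ))^2 := by
      nlinarith [(Nat.cast_nonneg n : (0:ℝ) ≤ (n : ℝ))]
    calc g₁ n ≤ eM * Real.exp (-(stmt7v U n)) := by
          simp only [hg₁def]
          exact div_le_self (by positivity) h2
      _ ≤ eM * 1 := mul_le_mul_of_nonneg_left h1 heM0.le
      _ = eM := mul_one _
  have hfg₁ : ∀ n, f n ≤ g₁ n := by
    intro n
    have h1 : eM * Real.exp (-(U n)) = f n * (1 + (n : ℝ))^2 := by
      rw [hUdef, heMdef]
      rw [show -(1 + Real.log M - Real.log (f n * (1 + (n : ℝ))^2))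
          = Real.log (f n * (1 + (n : ℝ))^2) - Real.log M - 1 by ring]
      rw [Real.exp_sub, Real.exp_sub, Real.exp_log (hfn2pos n), Real.exp_log hM0]
      field_simp
    have h2 : Real.exp (-(U n)) ≤ Real.exp (-(stmt7v U n)) :=
      Real.exp_le_exp.mpr (by linarith [hvle n])
    have h3 : f n = eM * Real.exp (-(U n)) / (1 + (n : ℝ))^2 := by
      rw [h1]
      field_simp
    rw [h3]
    simp only [hg₁def]
    gcongr
  set g : ℕ → ℝ := fun n => ⨆ k : ℕ, g₁ (n + k) with hgdef
  have hbdd : ∀ n, BddAbove (Set.range fun k : ℕ => g₁ (n + k)) := fun n =>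
    ⟨eM, by rintro x ⟨k, rfl⟩; exact hg₁le _⟩
  have hg₁g : ∀ n k, g₁ (n + k) ≤ g n := fun n k => le_ciSup (hbdd n) k
  have hgpos : ∀ n, 0 < g n := fun n =>
    lt_of_lt_of_le (hg₁pos n) (by simpa using hg₁g n 0)
  have hfg : ∀ n, f n ≤ g n := fun n => (hfg₁ n).trans (by simpa using hg₁g n 0)
  have hgmono : ∀ n m : ℕ, n ≤ m → g m ≤ g n := by
    intro n m' hnm
    obtain ⟨d, rfl⟩ := Nat.exists_eq_add_of_le hnm
    refine ciSup_le fun k => ?_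
    rw [show n + d + k = n + (d + k) by ring]
    exact hg₁g n (d + k)
  -- pointwise subconvolutivity
  have hΦ : ∀ a b : ℕ, (1 + ((a + b : ℕ) : ℝ)) * (1 + ((min a b : ℕ) : ℝ))
      ≤ 3 * ((1 + (a : ℝ)) * (1 + (b : ℝ))) := by
    intro a b
    have ha : (0 : ℝ) ≤ (a : ℝ) := Nat.cast_nonneg a
    have hb : (0 : ℝ) ≤ (b : ℝ) := Nat.cast_nonneg b
    rcases le_total a b with h | h
    · rw [min_eq_left h]
      have h' : (a : ℝ) ≤ (b : ℝ) := by exact_mod_cast h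
      push_cast
      nlinarith [mul_nonneg (by linarith : (0:ℝ) ≤ 1 + (a:ℝ)) (by linarith : (0:ℝ) ≤ 2 + 2*(b:ℝ) - (a:ℝ))]
    · rw [min_eq_right h]
      have h' : (b : ℝ) ≤ (a : ℝ) := by exact_mod_cast h
      push_cast
      nlinarith [mul_nonneg (by linarith : (0:ℝ) ≤ 1 + (b:ℝ)) (by linarith : (0:ℝ) ≤ 2 + 2*(a:ℝ) - (b:ℝ))]
  have hsub₁ : ∀ a b : ℕ, g₁ a * g₁ b
      ≤ g₁ (a + b) * (9 * eM / (1 + ((min a b : ℕ) : ℝ))^2) := by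
    intro a b
    have hva := stmt7v_subadd U hU1 a b
    have h1 : Real.exp (-(stmt7v U a)) * Real.exp (-(stmt7v U b))
        ≤ Real.exp (-(stmt7v U (a + b))) := by
      rw [← Real.exp_add]
      exact Real.exp_le_exp.mpr (by linarith)
    have h2 : ((1 : ℝ) + ((a + b : ℕ) : ℝ))^2 * (1 + ((min a b : ℕ) : ℝ))^2
        ≤ 9 * ((1 + (a : ℝ))^2 * (1 + (b : ℝ))^2) := by
      have h := hΦ a b
      have hX : (0 : ℝ) ≤ (1 + ((a + b : ℕ) : ℝ)) * (1 + ((min a b : ℕ) : ℝ)) := by positivity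
      nlinarith [h, hX]
    have h3 : eM * Real.exp (-(stmt7v U a)) * (eM * Real.exp (-(stmt7v U b)))
        ≤ eM * eM * Real.exp (-(stmt7v U (a + b))) := by
      calc eM * Real.exp (-(stmt7v U a)) * (eM * Real.exp (-(stmt7v U b)))
          = (eM * eM) * (Real.exp (-(stmt7v U a)) * Real.exp (-(stmt7v U b))) := by ring
        _ ≤ (eM * eM) * Real.exp (-(stmt7v U (a + b))) :=
            mul_le_mul_of_nonneg_left h1 (by positivity)
        _ = eM * eM * Real.exp (-(stmt7v U (a + b))) := by ring
    simp only [hg₁def]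
    rw [div_mul_div_comm, div_mul_div_comm, div_le_div_iff₀ (by positivity) (by positivity)]
    calc eM * Real.exp (-(stmt7v U a)) * (eM * Real.exp (-(stmt7v U b)))
          * ((1 + ((a + b : ℕ) : ℝ))^2 * (1 + ((min a b : ℕ) : ℝ))^2)
        ≤ (eM * eM * Real.exp (-(stmt7v U (a + b))))
          * (9 * ((1 + (a : ℝ))^2 * (1 + (b : ℝ))^2)) := by
          apply mul_le_mul h3 h2 (by positivity) (by positivity)
      _ = eM * Real.exp (-(stmt7v U (a + b))) * (9 * eM)
          * ((1 + (a : ℝ))^2 * (1 + (b : ℝ))^2) := by ring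
  have hsub₂ : ∀ a b k k' : ℕ, g₁ (a + k) * g₁ (b + k')
      ≤ g (a + b) * (9 * eM / (1 + ((min a b : ℕ) : ℝ))^2) := by
    intro a b k k'
    have h1 := hsub₁ (a + k) (b + k')
    have h2 : g₁ ((a + k) + (b + k')) ≤ g (a + b) := by
      rw [show (a + k) + (b + k') = (a + b) + (k + k') by ring]
      exact hg₁g _ _
    have h3 : 9 * eM / (1 + ((min (a + k) (b + k') : ℕ) : ℝ))^2
        ≤ 9 * eM / (1 + ((min a b : ℕ) : ℝ))^2 := by
      gcongr <;> omega
    calc g₁ (a + k) * g₁ (b + k')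
        ≤ g₁ ((a + k) + (b + k')) * (9 * eM / (1 + ((min (a + k) (b + k') : ℕ) : ℝ))^2) := h1
      _ ≤ g (a + b) * (9 * eM / (1 + ((min (a + k) (b + k') : ℕ) : ℝ))^2) :=
          mul_le_mul_of_nonneg_right h2 (by positivity)
      _ ≤ g (a + b) * (9 * eM / (1 + ((min a b : ℕ) : ℝ))^2) :=
          mul_le_mul_of_nonneg_left h3 (hgpos _).le
  have hsub : ∀ a b : ℕ, g a * g b ≤ g (a + b) * (9 * eM / (1 + ((min a b : ℕ) : ℝ))^2) := by
    intro a b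
    set R := g (a + b) * (9 * eM / (1 + ((min a b : ℕ) : ℝ))^2) with hRdef
    have hR0 : 0 < R := mul_pos (hgpos _) (by positivity)
    have step1 : ∀ k, g₁ (a + k) * g b ≤ R := by
      intro k
      have h : g b ≤ R / g₁ (a + k) :=
        ciSup_le fun k' => (le_div_iff₀ (hg₁pos _)).mpr (by
          rw [mul_comm]; exact hsub₂ a b k k')
      calc g₁ (a + k) * g b ≤ g₁ (a + k) * (R / g₁ (a + k)) :=
            mul_le_mul_of_nonneg_left h (hg₁pos _).le
        _ = R := by rw [mul_comm, div_mul_cancel₀ _ (ne_of_gt (hg₁pos (a + k)))]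
    have h : g a ≤ R / g b :=
      ciSup_le fun k => (le_div_iff₀ (hgpos b)).mpr (step1 k)
    calc g a * g b ≤ (R / g b) * g b := mul_le_mul_of_nonneg_right h (hgpos b).le
      _ = R := by rw [div_mul_cancel₀ _ (ne_of_gt (hgpos b))]
  -- decay of g
  have hgdecay : ∀ m : ℕ, ∃ C : ℝ, ∀ n : ℕ, 1 ≤ n → g n ≤ C * (n : ℝ) ^ (-(m : ℝ)) := by
    intro m
    obtain ⟨C', hC'⟩ := hdecay (2 * m + 3)
    have hC'pos : 0 < C' := by
      have h1 := hC' 1 le_rfl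
      rw [Nat.cast_one, Real.one_rpow, mul_one] at h1
      exact lt_of_lt_of_le (hpos 1) h1
    set D : ℝ := max (Real.log C' + 2 * Real.log 2 - 1 - Real.log M) 0 with hDdef
    have hD : 0 ≤ D := le_max_right _ _
    have hUlog : ∀ a : ℕ, 1 ≤ a → 2 * (m : ℝ) * Real.log a - D ≤ U a := by
      intro a ha
      have ha1 : (1 : ℝ) ≤ (a : ℝ) := by exact_mod_cast ha
      have ha0 : (0 : ℝ) < (a : ℝ) := by linarith
      have hfa : Real.log (f a) ≤ Real.log C' - (2 * (m : ℝ) + 3) * Real.log a := by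
        have h1 := hC' a ha
        have h2 : Real.log (f a) ≤ Real.log (C' * (a : ℝ) ^ (-((2 * m + 3 : ℕ) : ℝ))) :=
          Real.log_le_log (hpos a) h1
        rw [Real.log_mul (ne_of_gt hC'pos) (by positivity), Real.log_rpow ha0] at h2
        push_cast at h2
        linarith
      have hlog1a : Real.log (1 + (a : ℝ)) ≤ Real.log 2 + Real.log a := by
        have hle : (1 + (a : ℝ)) ≤ 2 * a := by linarith
        have := Real.log_le_log (by positivity) hle
        rwa [Real.log_mul two_ne_zero (ne_of_gt ha0)] at this
      have hloga0 : 0 ≤ Real.log a := Real.log_nonneg ha1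
      have hUa : U a = 1 + Real.log M - Real.log (f a) - 2 * Real.log (1 + (a : ℝ)) := by
        simp only [hUdef]
        rw [Real.log_mul (ne_of_gt (hpos a)) (by positivity), show ((1 + (a:ℝ))^2) = (1+(a:ℝ))^(2:ℕ) by norm_num, Real.log_pow]
        push_cast
        ring
      have hD0D : Real.log C' + 2 * Real.log 2 - 1 - Real.log M ≤ D := le_max_left _ _
      rw [hUa]
      linarith
    have hvlow := stmt7v_lower U hU1 m D hD hUlog
    refine ⟨eM * Real.exp (2 * (m : ℝ) * Real.log (4 * m) + D), fun n hn => ?_⟩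
    have hn1 : (1 : ℝ) ≤ (n : ℝ) := by exact_mod_cast hn
    have hn0 : (0 : ℝ) < (n : ℝ) := by linarith
    refine ciSup_le fun k => ?_
    set E : ℝ := 2 * (m : ℝ) * Real.log (4 * m) + D with hEdef
    have h1 : g₁ (n + k) ≤ eM * Real.exp (-(stmt7v U (n + k))) := by
      simp only [hg₁def]
      exact div_le_self (by positivity)
        (by nlinarith [(Nat.cast_nonneg (n + k) : (0:ℝ) ≤ ((n + k : ℕ) : ℝ))])
    have hnk1 : 1 ≤ n + k := le_trans hn (Nat.le_add_right n k)
    have h2 := hvlow (n + k) hnk1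
    have h3 : Real.log (n : ℝ) ≤ Real.log ((n + k : ℕ) : ℝ) :=
      Real.log_le_log hn0 (by exact_mod_cast Nat.le_add_right n k)
    have hm0 : (0 : ℝ) ≤ (m : ℝ) := Nat.cast_nonneg m
    have h4 : -(stmt7v U (n + k)) ≤ E - (m : ℝ) * Real.log (n : ℝ) := by
      have := mul_le_mul_of_nonneg_left h3 hm0
      linarith
    have h5 : Real.exp (E - (m : ℝ) * Real.log (n : ℝ))
        = Real.exp E * (n : ℝ) ^ (-(m : ℝ)) := by
      rw [Real.rpow_def_of_pos hn0, ← Real.exp_add]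
      congr 1
      ring
    calc g₁ (n + k) ≤ eM * Real.exp (-(stmt7v U (n + k))) := h1
      _ ≤ eM * Real.exp (E - (m : ℝ) * Real.log (n : ℝ)) :=
          mul_le_mul_of_nonneg_left (Real.exp_le_exp.mpr h4) heM0.le
      _ = eM * Real.exp E * (n : ℝ) ^ (-(m : ℝ)) := by rw [h5]; ring
  -- the reproducing bound
  refine ⟨g, hgpos, hfg, hgmono, hgdecay,
    ⟨9 * eM * ((∑' n : ℤ, stmt7q n) + (∑' n : ℤ, stmt7q n)), fun j k => ?_⟩⟩
  have hq1 : Summable fun l : ℤ => stmt7q (j - l) :=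
    (Equiv.subLeft j).summable_iff.mpr stmt7q_summable
  have hq2 : Summable fun l : ℤ => stmt7q (l - k) :=
    (Equiv.subRight k).summable_iff.mpr stmt7q_summable
  have hmain : ∀ l : ℤ, g (j - l).natAbs * g (l - k).natAbs / g (j - k).natAbs
      ≤ 9 * eM * (stmt7q (j - l) + stmt7q (l - k)) := by
    intro l
    set a := (j - l).natAbs with hadef
    set b := (l - k).natAbs with hbdef
    set d := (j - k).natAbs with hddef
    have hdab : d ≤ a + b := by
      have heq : j - k = (j - l) + (l - k) := by ring
      calc d = ((j - l) + (l - k)).natAbs := by rw [hddef, heq]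
        _ ≤ a + b := Int.natAbs_add_le _ _
    have h1 : g (a + b) ≤ g d := hgmono d (a + b) hdab
    have h2 : g a * g b ≤ g d * (9 * eM / (1 + ((min a b : ℕ) : ℝ))^2) :=
      (hsub a b).trans (mul_le_mul_of_nonneg_right h1 (by positivity))
    have h3 : g a * g b / g d ≤ 9 * eM / (1 + ((min a b : ℕ) : ℝ))^2 := by
      rw [div_le_iff₀ (hgpos d), mul_comm (9 * eM / (1 + ((min a b : ℕ) : ℝ))^2) (g d)]
      exact h2
    refine h3.trans ?_
    have hqa : stmt7q (j - l) = ((1 + (a : ℝ))^2)⁻¹ := rfl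
    have hqb : stmt7q (l - k) = ((1 + (b : ℝ))^2)⁻¹ := rfl
    rcases min_cases a b with ⟨hmin, -⟩ | ⟨hmin, -⟩
    · rw [hmin]
      calc 9 * eM / (1 + (a : ℝ))^2 = 9 * eM * stmt7q (j - l) := by
            rw [hqa, div_eq_mul_inv]
        _ ≤ 9 * eM * (stmt7q (j - l) + stmt7q (l - k)) := by
            apply mul_le_mul_of_nonneg_left _ (by positivity)
            linarith [stmt7q_nonneg (l - k)]
    · rw [hmin]
      calc 9 * eM / (1 + (b : ℝ))^2 = 9 * eM * stmt7q (l - k) := by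
            rw [hqb, div_eq_mul_inv]
        _ ≤ 9 * eM * (stmt7q (j - l) + stmt7q (l - k)) := by
            apply mul_le_mul_of_nonneg_left _ (by positivity)
            linarith [stmt7q_nonneg (j - l)]
  have hterm_nonneg : ∀ l : ℤ, 0 ≤ g (j - l).natAbs * g (l - k).natAbs / g (j - k).natAbs :=
    fun l => div_nonneg (mul_nonneg (hgpos _).le (hgpos _).le) (hgpos _).le
  have hRHS : Summable fun l : ℤ => 9 * eM * (stmt7q (j - l) + stmt7q (l - k)) :=
    (hq1.add hq2).mul_left _
  have hsumm : Summable (fun l : ℤ => g (j - l).natAbs * g (l - k).natAbs / g (j - k).natAbs) :=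
    Summable.of_nonneg_of_le hterm_nonneg hmain hRHS
  refine ⟨hsumm, ?_⟩
  have e1 : (∑' l : ℤ, stmt7q (j - l)) = ∑' n : ℤ, stmt7q n := (Equiv.subLeft j).tsum_eq stmt7q
  have e2 : (∑' l : ℤ, stmt7q (l - k)) = ∑' n : ℤ, stmt7q n := (Equiv.subRight k).tsum_eq stmt7q
  calc (∑' l : ℤ, g (j - l).natAbs * g (l - k).natAbs / g (j - k).natAbs)
      ≤ ∑' l : ℤ, 9 * eM * (stmt7q (j - l) + stmt7q (l - k)) := Summable.tsum_le_tsum hmain hsumm hRHS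
    _ = 9 * eM * ((∑' l : ℤ, stmt7q (j - l)) + (∑' l : ℤ, stmt7q (l - k))) := by
        rw [tsum_mul_left, Summable.tsum_add hq1 hq2]
    _ = 9 * eM * ((∑' n : ℤ, stmt7q n) + (∑' n : ℤ, stmt7q n)) := by rw [e1, e2]
end

section
/- Let (g'_n)_{n≥1} be a positive sequence satisfying Σ_{k=1}^{n-1} g'_k · g'_{n-k} ≤ (1/2)·g'_n for all n ≥ 2. Define a_0 = 1 and suppose (b_n)_{n≥1} satisfies b_n ≤ 2·(g'_n·a_0 + g'_{n-1}·a_1 + ... + g'_1·a_{n-1}) where a_n := 2n·g'_n for n ≥ 1. Then indeed 2·(g'_n + Σ_{k=1}^{n-1} g'_{n-k}·a_k) ≤ a_n, i.e. 2·(g'_n + Σ_{k=1}^{n-1} g'_{n-k}·2k·g'_k) ≤ 2n·g'_n for all n ≥ 1; consequently b_n ≤ 2n·g'_n. -/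
lemma ico_reflect (n : ℕ) (F : ℕ → ℝ) :
    ∑ k ∈ Finset.Ico 1 n, F k = ∑ k ∈ Finset.Ico 1 n, F (n - k) := by
  rw [Finset.sum_Ico_eq_sum_range, Finset.sum_Ico_eq_sum_range]
  rw [← Finset.sum_range_reflect (fun j => F (1 + j)) (n - 1)]
  apply Finset.sum_congr rfl
  intro j hj
  simp only [Finset.mem_range] at hj
  congr 1
  omega

/-- The key recursive estimate: if `Σ_{k=1}^{n-1} g'_k·g'_{n-k} ≤ (1/2)·g'_n` and
`a_0 = 1`, `a_n = 2n·g'_n` for `n ≥ 1`, then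
`2·(g'_n·a_0 + Σ_{k=1}^{n-1} g'_{n-k}·a_k) ≤ a_n = 2n·g'_n`; consequently any
sequence `b` with `b_n ≤ 2·Σ_{k=0}^{n-1} g'_{n-k}·a_k` satisfies `b_n ≤ 2n·g'_n`. -/
theorem stmt8 (g' b a : ℕ → ℝ)
    (hpos : ∀ n, 1 ≤ n → 0 < g' n)
    (hhalf : ∀ n, 2 ≤ n → ∑ k ∈ Finset.Ico 1 n, g' k * g' (n - k) ≤ (1 / 2) * g' n)
    (ha0 : a 0 = 1)
    (ha : ∀ n, 1 ≤ n → a n = 2 * n * g' n)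
    (hb : ∀ n, 1 ≤ n → b n ≤ 2 * ∑ k ∈ Finset.range n, g' (n - k) * a k) :
    (∀ n, 1 ≤ n →
      2 * (g' n * a 0 + ∑ k ∈ Finset.Ico 1 n, g' (n - k) * a k) ≤ 2 * n * g' n) ∧
    (∀ n, 1 ≤ n → b n ≤ 2 * n * g' n) := by
  have key : ∀ n, 1 ≤ n →
      2 * (g' n * a 0 + ∑ k ∈ Finset.Ico 1 n, g' (n - k) * a k) ≤ 2 * n * g' n := by
    intro n hn
    rcases eq_or_lt_of_le hn with h1 | h2
    · subst h1; simp [ha0]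
    · have hn2 : 2 ≤ n := h2
      have hsum : ∑ k ∈ Finset.Ico 1 n, g' (n - k) * a k
          = 2 * ∑ k ∈ Finset.Ico 1 n, (k : ℝ) * (g' k * g' (n - k)) := by
        rw [Finset.mul_sum]
        apply Finset.sum_congr rfl
        intro k hk
        simp only [Finset.mem_Ico] at hk
        rw [ha k hk.1]
        ring
      have hrefl : (∑ k ∈ Finset.Ico 1 n, (k : ℝ) * (g' k * g' (n - k)))
          + (∑ k ∈ Finset.Ico 1 n, (k : ℝ) * (g' k * g' (n - k)))
          = (n : ℝ) * ∑ k ∈ Finset.Ico 1 n, g' k * g' (n - k) := by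
        have h2 : (∑ k ∈ Finset.Ico 1 n, (k : ℝ) * (g' k * g' (n - k)))
            = ∑ k ∈ Finset.Ico 1 n, ((n : ℝ) - k) * (g' k * g' (n - k)) := by
          rw [ico_reflect n (fun k => (k : ℝ) * (g' k * g' (n - k)))]
          apply Finset.sum_congr rfl
          intro k hk
          simp only [Finset.mem_Ico] at hk
          have h1 : n - (n - k) = k := by omega
          have h2 : ((n - k : ℕ) : ℝ) = (n : ℝ) - k := by
            have : k ≤ n := le_of_lt hk.2
            push_cast [Nat.cast_sub this]; ring
          rw [h1, h2]
          ring
        nth_rewrite 2 [h2]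
        rw [← Finset.sum_add_distrib, Finset.mul_sum]
        apply Finset.sum_congr rfl
        intro k _
        ring
      have hSle : (∑ k ∈ Finset.Ico 1 n, g' k * g' (n - k)) ≤ (1 / 2) * g' n := hhalf n hn2
      have hg : 0 < g' n := hpos n hn
      have hn2' : (2 : ℝ) ≤ n := by exact_mod_cast hn2
      have hSnonneg : 0 ≤ ∑ k ∈ Finset.Ico 1 n, g' k * g' (n - k) := by
        apply Finset.sum_nonneg
        intro k hk
        simp only [Finset.mem_Ico] at hk
        exact mul_nonneg (hpos k hk.1).le (hpos (n - k) (by omega)).le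
      rw [ha0, hsum]
      nlinarith [hrefl, hSle, hg, hn2', hSnonneg]
  refine ⟨key, fun n hn => ?_⟩
  have := hb n hn
  have hsplit : ∑ k ∈ Finset.range n, g' (n - k) * a k
      = g' n * a 0 + ∑ k ∈ Finset.Ico 1 n, g' (n - k) * a k := by
    rw [Finset.range_eq_Ico, Finset.sum_eq_sum_Ico_succ_bot (by omega : 0 < n)]
    simp
  calc b n ≤ 2 * ∑ k ∈ Finset.range n, g' (n - k) * a k := this
    _ = 2 * (g' n * a 0 + ∑ k ∈ Finset.Ico 1 n, g' (n - k) * a k) := by rw [hsplit]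
    _ ≤ 2 * n * g' n := key n hn
end

section
/- Let A₊ and A₋ be subsets of ℝ² contained in two non-intersecting closed cones with common apex p. If F₊ ∈ 𝒞⁰_{A₊} and F₋ ∈ 𝒞⁰_{A₋} satisfy F₋ + F₊ = 0 (as 0-chains, pointwise in j and s), then F₊ ∈ 𝒞⁰_{p} and F₋ ∈ 𝒞⁰_{p}, i.e. ‖(F₊)_j‖ ≤ h(|j−p|) for some MDP h = O(r^{-∞}). -/
/-- `g(r) = O(r^{-∞})`. -/
def IsODecay (g : ℝ → ℝ) : Prop :=
  ∀ n : ℕ, ∃ C : ℝ, ∀ r : ℝ, 1 ≤ r → g r ≤ C * r ^ (-(n : ℝ))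

/-- A 0-chain `F(s) = Σ_j F(s)_j` is approximately supported near a region whose
distance function on sites is `d`: `‖F(s)_j‖ ≤ g(d j)` for an MDP `g = O(r^{-∞})`. -/
def SupportedNear {𝒜 Λ : Type*} [NormedRing 𝒜] (d : Λ → ℝ) (F : ℝ → Λ → 𝒜) : Prop :=
  ∃ g : ℝ → ℝ, (∀ r : ℝ, 0 < g r) ∧ (∀ r s : ℝ, r ≤ s → g s ≤ g r) ∧ IsODecay g ∧
    ∀ (s : ℝ) (j : Λ), ‖F s j‖ ≤ g (d j)

/-- The (closed) cone in the plane `ℝ² ≅ ℂ` with apex `p` over a set `S` of unit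
directions. -/
def coneOver (p : ℂ) (S : Set ℂ) : Set ℂ :=
  {z : ℂ | ∃ t : ℝ, 0 ≤ t ∧ ∃ v ∈ S, z = p + t • v}

lemma normSq_of_norm_one {u : ℂ} (hu : ‖u‖ = 1) : u.re ^ 2 + u.im ^ 2 = 1 := by
  have h : Complex.normSq u = 1 := by
    rw [Complex.normSq_eq_norm_sq, hu, one_pow]
  simpa [Complex.normSq_apply, sq] using h

lemma normSq_identity (u v : ℂ) (t s : ℝ) (hu : ‖u‖ = 1) (hv : ‖v‖ = 1) :
    ‖t • u - s • v‖ ^ 2 = (t - s) ^ 2 + t * s * ‖u - v‖ ^ 2 := by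
  have hu' := normSq_of_norm_one hu
  have hv' := normSq_of_norm_one hv
  have h1 : ‖t • u - s • v‖ ^ 2 = (t * u.re - s * v.re) ^ 2 + (t * u.im - s * v.im) ^ 2 := by
    rw [Complex.sq_norm, Complex.normSq_apply]
    simp [Complex.sub_re, Complex.sub_im, Complex.smul_re, Complex.smul_im]
    ring
  have h2 : ‖u - v‖ ^ 2 = (u.re - v.re) ^ 2 + (u.im - v.im) ^ 2 := by
    rw [Complex.sq_norm, Complex.normSq_apply]
    simp [Complex.sub_re, Complex.sub_im]
    ring
  rw [h1, h2]
  linear_combination (t ^ 2 - t * s) * hu' + (s ^ 2 - t * s) * hv'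

lemma sep_lemma {u v : ℂ} {t s δ : ℝ} (hu : ‖u‖ = 1) (hv : ‖v‖ = 1)
    (ht : 0 ≤ t) (hs : 0 ≤ s) (hδ0 : 0 < δ) (hδ1 : δ ≤ 1) (hd : δ ≤ ‖u - v‖) :
    δ / 2 * (t + s) ≤ ‖t • u - s • v‖ := by
  have key := normSq_identity u v t s hu hv
  have hsq : (δ / 2 * (t + s)) ^ 2 ≤ ‖t • u - s • v‖ ^ 2 := by
    rw [key]
    have h1 : δ ^ 2 ≤ ‖u - v‖ ^ 2 := by nlinarith [norm_nonneg (u - v)]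
    have h2 : t * s * δ ^ 2 ≤ t * s * ‖u - v‖ ^ 2 :=
      mul_le_mul_of_nonneg_left h1 (mul_nonneg ht hs)
    have h3 : (0:ℝ) ≤ (1 - δ ^ 2) * (t - s) ^ 2 :=
      mul_nonneg (by nlinarith) (sq_nonneg (t - s))
    nlinarith
  have h0 : 0 ≤ δ / 2 * (t + s) := by positivity
  nlinarith [norm_nonneg (t • u - s • v)]

lemma cone_sep {p : ℂ} {Sp Sm : Set ℂ} (hSp : Sp ⊆ Metric.sphere (0 : ℂ) 1)
    (hSm : Sm ⊆ Metric.sphere (0 : ℂ) 1) {δ : ℝ} (hδ0 : 0 < δ) (hδ1 : δ ≤ 1)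
    (hsep : ∀ u ∈ Sp, ∀ v ∈ Sm, δ ≤ dist u v)
    {a b : ℂ} (ha : a ∈ coneOver p Sp) (hb : b ∈ coneOver p Sm) :
    δ / 2 * (dist a p + dist b p) ≤ dist a b := by
  obtain ⟨t, ht, u, hu, rfl⟩ := ha
  obtain ⟨s, hs, v, hv, rfl⟩ := hb
  have hun : ‖u‖ = 1 := by simpa [Complex.dist_eq] using hSp hu
  have hvn : ‖v‖ = 1 := by simpa [Complex.dist_eq] using hSm hv
  have hd : δ ≤ ‖u - v‖ := by
    have := hsep u hu v hv
    simpa [dist_eq_norm] using this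
  have h1 : dist (p + t • u) p = t := by
    simp [dist_eq_norm, norm_smul, abs_of_nonneg ht, hun]
  have h2 : dist (p + s • v) p = s := by
    simp [dist_eq_norm, norm_smul, abs_of_nonneg hs, hvn]
  have h3 : dist (p + t • u) (p + s • v) = ‖t • u - s • v‖ := by
    rw [dist_eq_norm]; ring_nf
  rw [h1, h2, h3]
  exact sep_lemma hun hvn ht hs hδ0 hδ1 hd

lemma dist_le_sum_infDist {p : ℂ} {Sp Sm : Set ℂ} (hSp : Sp ⊆ Metric.sphere (0 : ℂ) 1)
    (hSm : Sm ⊆ Metric.sphere (0 : ℂ) 1) {δ : ℝ} (hδ0 : 0 < δ) (hδ1 : δ ≤ 1)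
    (hsep : ∀ u ∈ Sp, ∀ v ∈ Sm, δ ≤ dist u v)
    {Ap Am : Set ℂ} (hApne : Ap.Nonempty) (hAmne : Am.Nonempty)
    (hAp : Ap ⊆ coneOver p Sp) (hAm : Am ⊆ coneOver p Sm) (z : ℂ) :
    dist z p ≤ (1 + 2 / δ) * (Metric.infDist z Ap + Metric.infDist z Am) := by
  have hc : (0:ℝ) < 2 / δ := by positivity
  have claim : ∀ ε : ℝ, 0 < ε →
      dist z p ≤ (1 + 2 / δ) * (Metric.infDist z Ap + Metric.infDist z Am) + (1 + 2 * (2 / δ)) * ε := by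
    intro ε hεpos
    obtain ⟨a, haA, haz⟩ := (Metric.infDist_lt_iff hApne).mp
      (show Metric.infDist z Ap < Metric.infDist z Ap + ε by linarith)
    obtain ⟨b, hbA, hbz⟩ := (Metric.infDist_lt_iff hAmne).mp
      (show Metric.infDist z Am < Metric.infDist z Am + ε by linarith)
    have hsepab := cone_sep hSp hSm hδ0 hδ1 hsep (hAp haA) (hAm hbA)
    have hab : dist a b ≤ Metric.infDist z Ap + Metric.infDist z Am + 2 * ε := by
      calc dist a b ≤ dist a z + dist z b := dist_triangle a z b
      _ ≤ (Metric.infDist z Ap + ε) + (Metric.infDist z Am + ε) := by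
          rw [dist_comm a z]; linarith
      _ = Metric.infDist z Ap + Metric.infDist z Am + 2 * ε := by ring
    have hap : dist a p ≤ 2 / δ * dist a b := by
      have hbp : (0:ℝ) ≤ dist b p := dist_nonneg
      rw [div_mul_eq_mul_div, le_div_iff₀ hδ0]
      nlinarith
    have habc : 2 / δ * dist a b ≤ 2 / δ * (Metric.infDist z Ap + Metric.infDist z Am + 2 * ε) :=
      mul_le_mul_of_nonneg_left hab hc.le
    have hexp : 2 / δ * (Metric.infDist z Ap + Metric.infDist z Am + 2 * ε)
        = 2 / δ * Metric.infDist z Ap + 2 / δ * Metric.infDist z Am + 2 * (2 / δ * ε) := by ring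
    have hrhs : (1 + 2 / δ) * (Metric.infDist z Ap + Metric.infDist z Am) + (1 + 2 * (2 / δ)) * ε
        = Metric.infDist z Ap + Metric.infDist z Am
          + 2 / δ * Metric.infDist z Ap + 2 / δ * Metric.infDist z Am
          + ε + 2 * (2 / δ * ε) := by ring
    have hdm : (0:ℝ) ≤ Metric.infDist z Am := Metric.infDist_nonneg
    calc dist z p ≤ dist z a + dist a p := dist_triangle z a p
    _ ≤ (Metric.infDist z Ap + ε) + 2 / δ * dist a b := by linarith
    _ ≤ _ := by rw [hrhs]; linarith [hexp ▸ habc]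
  refine le_of_forall_pos_le_add ?_
  intro ε hε
  have h1 : (0:ℝ) < 1 + 2 * (2 / δ) := by positivity
  have := claim (ε / (1 + 2 * (2 / δ))) (by positivity)
  rwa [mul_div_cancel₀ _ h1.ne'] at this

lemma isODecay_scale {g : ℝ → ℝ} (hgpos : ∀ r, 0 < g r)
    (hmono : ∀ r s : ℝ, r ≤ s → g s ≤ g r) (hdec : IsODecay g)
    {L : ℝ} (hL : 1 ≤ L) : IsODecay (fun r => g (r / L)) := by
  intro n
  obtain ⟨C, hC⟩ := hdec n
  have hL0 : (0:ℝ) < L := lt_of_lt_of_le one_pos hL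
  have hC0 : 0 < C := by
    have := hC 1 le_rfl
    simpa using lt_of_lt_of_le (hgpos 1) this
  refine ⟨max C (g (1 / L)) * L ^ (n : ℝ), fun r hr => ?_⟩
  have hr0 : (0:ℝ) < r := lt_of_lt_of_le one_pos hr
  have hLpow : (0:ℝ) < L ^ (n : ℝ) := Real.rpow_pos_of_pos hL0 _
  have hrpow : (0:ℝ) < r ^ (n : ℝ) := Real.rpow_pos_of_pos hr0 _
  have hneg : r ^ (-(n:ℝ)) = (r ^ (n:ℝ))⁻¹ := Real.rpow_neg hr0.le _
  rcases le_or_gt L r with hLr | hLr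
  · -- large r
    have h1 : (1:ℝ) ≤ r / L := (one_le_div hL0).mpr hLr
    have h2 := hC (r / L) h1
    have h3 : (r / L) ^ (-(n:ℝ)) = L ^ (n:ℝ) * (r ^ (n:ℝ))⁻¹ := by
      rw [Real.rpow_neg (by positivity), Real.div_rpow hr0.le hL0.le]
      rw [inv_div]
      rw [div_eq_mul_inv]
    calc g (r / L) ≤ C * (r / L) ^ (-(n:ℝ)) := h2
    _ = C * L ^ (n:ℝ) * (r ^ (n:ℝ))⁻¹ := by rw [h3]; ring
    _ ≤ max C (g (1 / L)) * L ^ (n:ℝ) * (r ^ (n:ℝ))⁻¹ := by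
        apply mul_le_mul_of_nonneg_right _ (by positivity)
        exact mul_le_mul_of_nonneg_right (le_max_left _ _) hLpow.le
    _ = max C (g (1 / L)) * L ^ (n:ℝ) * r ^ (-(n:ℝ)) := by rw [hneg]
  · -- small r
    have h1 : g (r / L) ≤ g (1 / L) := hmono _ _ (by
      exact by gcongr)
    have h2 : r ^ (n:ℝ) ≤ L ^ (n:ℝ) :=
      Real.rpow_le_rpow hr0.le hLr.le (Nat.cast_nonneg n)
    have h3 : (1:ℝ) ≤ L ^ (n:ℝ) * (r ^ (n:ℝ))⁻¹ := by
      rw [← div_eq_mul_inv, le_div_iff₀ hrpow, one_mul]; exact h2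
    have h4 : 0 < g (1 / L) := hgpos _
    calc g (r / L) ≤ g (1 / L) := h1
    _ ≤ g (1 / L) * (L ^ (n:ℝ) * (r ^ (n:ℝ))⁻¹) := le_mul_of_one_le_right h4.le h3
    _ ≤ max C (g (1 / L)) * (L ^ (n:ℝ) * (r ^ (n:ℝ))⁻¹) := by
        apply mul_le_mul_of_nonneg_right (le_max_right _ _) (by positivity)
    _ = max C (g (1 / L)) * L ^ (n:ℝ) * r ^ (-(n:ℝ)) := by rw [hneg]; ring

/-- If `A₊`, `A₋` lie inside two non-intersecting closed cones with common apex
`p`, and the 0-chains `F₊ ∈ 𝒞⁰_{A₊}`, `F₋ ∈ 𝒞⁰_{A₋}` satisfy `F₋ + F₊ = 0`, then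
both `F₊` and `F₋` are localized at the point `p`: `F₊, F₋ ∈ 𝒞⁰_p`. -/
theorem stmt12 {𝒜 Λ : Type*} [NormedRing 𝒜] (ι : Λ → ℂ) (p : ℂ)
    (Sp Sm : Set ℂ)
    (hSpcl : IsClosed Sp) (hSmcl : IsClosed Sm)
    (hSp : Sp ⊆ Metric.sphere (0 : ℂ) 1) (hSm : Sm ⊆ Metric.sphere (0 : ℂ) 1)
    (hdisj : Disjoint Sp Sm)
    (Ap Am : Set ℂ) (hApne : Ap.Nonempty) (hAmne : Am.Nonempty)
    (hAp : Ap ⊆ coneOver p Sp) (hAm : Am ⊆ coneOver p Sm)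
    (Fp Fm : ℝ → Λ → 𝒜)
    (hFp : SupportedNear (fun j => Metric.infDist (ι j) Ap) Fp)
    (hFm : SupportedNear (fun j => Metric.infDist (ι j) Am) Fm)
    (hsum : ∀ (s : ℝ) (j : Λ), Fm s j + Fp s j = 0) :
    SupportedNear (fun j => dist (ι j) p) Fp ∧
    SupportedNear (fun j => dist (ι j) p) Fm := by
  -- Sp, Sm nonempty
  obtain ⟨a0, ha0⟩ := hApne
  obtain ⟨_, _, u0, hu0, _⟩ := hAp ha0
  obtain ⟨b0, hb0⟩ := hAmne
  obtain ⟨_, _, v0, hv0, _⟩ := hAm hb0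
  have hSpne : Sp.Nonempty := ⟨u0, hu0⟩
  have hSmne : Sm.Nonempty := ⟨v0, hv0⟩
  -- positive separation δ between Sp and Sm
  have hSpcomp : IsCompact Sp := (isCompact_sphere (0:ℂ) 1).of_isClosed_subset hSpcl hSp
  obtain ⟨w, hwSp, hwmin'⟩ := hSpcomp.exists_isMinOn hSpne
    ((Metric.continuous_infDist_pt Sm).continuousOn)
  have hwmin := isMinOn_iff.mp hwmin'
  have hδ0pos : 0 < Metric.infDist w Sm := by
    rw [← hSmcl.notMem_iff_infDist_pos hSmne]
    exact fun hw => (Set.disjoint_left.mp hdisj hwSp) hw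
  set δ : ℝ := min (Metric.infDist w Sm) 1 with hδdef
  have hδ0 : 0 < δ := lt_min hδ0pos one_pos
  have hδ1 : δ ≤ 1 := min_le_right _ _
  have hsep : ∀ u ∈ Sp, ∀ v ∈ Sm, δ ≤ dist u v := by
    intro u hu v hv
    calc δ ≤ Metric.infDist w Sm := min_le_left _ _
    _ ≤ Metric.infDist u Sm := hwmin u hu
    _ ≤ dist u v := Metric.infDist_le_dist_of_mem hv
  -- the scale
  set L : ℝ := 2 * (1 + 2 / δ) with hLdef
  have hL1 : (1:ℝ) ≤ L := by
    have : (0:ℝ) < 2 / δ := by positivity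
    rw [hLdef]; linarith
  have hL0 : (0:ℝ) < L := lt_of_lt_of_le one_pos hL1
  -- key geometric bound
  have hgeom : ∀ j : Λ, dist (ι j) p / L ≤ Metric.infDist (ι j) Ap ∨
      dist (ι j) p / L ≤ Metric.infDist (ι j) Am := by
    intro j
    have h1 := dist_le_sum_infDist hSp hSm hδ0 hδ1 hsep ⟨a0, ha0⟩ ⟨b0, hb0⟩ hAp hAm (ι j)
    by_contra hcon
    push_neg at hcon
    obtain ⟨h2, h3⟩ := hcon
    rw [lt_div_iff₀ hL0] at h2 h3
    rw [hLdef] at h2 h3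
    nlinarith
  -- unpack the supports
  obtain ⟨gp, hgp_pos, hgp_mono, hgp_dec, hgp_bd⟩ := hFp
  obtain ⟨gm, hgm_pos, hgm_mono, hgm_dec, hgm_bd⟩ := hFm
  have hnorm : ∀ (s : ℝ) (j : Λ), ‖Fm s j‖ = ‖Fp s j‖ := by
    intro s j
    rw [eq_neg_of_add_eq_zero_left (hsum s j), norm_neg]
  -- the common dominating function
  set h : ℝ → ℝ := fun r => gp (r / L) + gm (r / L) with hhdef
  have hpos : ∀ r, 0 < h r := fun r => add_pos (hgp_pos _) (hgm_pos _)
  have hmono : ∀ r s : ℝ, r ≤ s → h s ≤ h r := by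
    intro r s hrs
    have : r / L ≤ s / L := by gcongr
    exact add_le_add (hgp_mono _ _ this) (hgm_mono _ _ this)
  have hdec : IsODecay h := by
    intro n
    obtain ⟨C1, hC1⟩ := isODecay_scale hgp_pos hgp_mono hgp_dec hL1 n
    obtain ⟨C2, hC2⟩ := isODecay_scale hgm_pos hgm_mono hgm_dec hL1 n
    exact ⟨C1 + C2, fun r hr => by
      have := hC1 r hr; have := hC2 r hr
      simp only [hhdef]; rw [add_mul]; linarith⟩
  have hbd : ∀ (s : ℝ) (j : Λ), ‖Fp s j‖ ≤ h (dist (ι j) p) := by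
    intro s j
    rcases hgeom j with hcase | hcase
    · calc ‖Fp s j‖ ≤ gp (Metric.infDist (ι j) Ap) := hgp_bd s j
      _ ≤ gp (dist (ι j) p / L) := hgp_mono _ _ hcase
      _ ≤ h (dist (ι j) p) := le_add_of_nonneg_right (hgm_pos _).le
    · calc ‖Fp s j‖ = ‖Fm s j‖ := (hnorm s j).symm
      _ ≤ gm (Metric.infDist (ι j) Am) := hgm_bd s j
      _ ≤ gm (dist (ι j) p / L) := hgm_mono _ _ hcase
      _ ≤ h (dist (ι j) p) := le_add_of_nonneg_left (hgp_pos _).le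
  refine ⟨⟨h, hpos, hmono, hdec, hbd⟩, ⟨h, hpos, hmono, hdec, fun s j => ?_⟩⟩
  rw [hnorm s j]; exact hbd s j
end

section
/- Let G be a finite group and ω a normalized U(1)-valued 3-cocycle. For each g ∈ G define operators on ℂ[G]: K'(g)⟨l| = ⟨lg| (right translation) and, on ℂ[G]⊗ℂ[G], the diagonal K''(g): (⟨l⟩⊗⟨m|)·K''(g) = (⟨l|⊗⟨m|)·ω(l m⁻¹, m, g). Set U(g) := (product over the chain of) K''(g)·K'(g) acting on a finite chain ℂ[G]^{⊗N} with K''(g) acting on consecutive pairs. Then U(g)U(h)U(gh)⁻¹ acts diagonally, multiplying the basis vector ⟨l₁|⊗⋯⊗⟨l_N| by Π_{x=1}^{N-1} ω(l_x, g, h)/ω(l_{x+1}, g, h) = ω(l₁,g,h)/ω(l_N,g,h). -/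
/-- A U(1)-valued 3-cocycle on `G` (trivial action). -/
def IsCocycle {G : Type*} [Group G] (ω : G → G → G → Circle) : Prop :=
  ∀ g h k l : G, ω h k l * ω g (h * k) l * ω g h k = ω (g * h) k l * ω g h (k * l)

/-- The truncated symmetry action `U(g) = (∏ K''(g))·K'(g)` on a finite chain of
`N+1` copies of `ℂ[G]`: a vector with coefficients `f` on the basis indexed by
`l : Fin (N+1) → G` is sent to the vector whose coefficient at `l` is the product
of the link phases `ω(l_x l_{x+1}⁻¹, l_{x+1}, g)` times `f` evaluated at the
right-translated configuration. -/
noncomputable def truncatedAction {G : Type*} [Group G] (ω : G → G → G → Circle) (N : ℕ)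
    (g : G) (f : (Fin (N + 1) → G) → ℂ) : (Fin (N + 1) → G) → ℂ :=
  fun l =>
    (∏ x : Fin N, ((ω (l x.castSucc * (l x.succ)⁻¹) (l x.succ) g : Circle) : ℂ)) *
      f (fun x => l x * g)

/-- Telescoping product in a commutative group. -/
private lemma telescope {M : Type*} [CommGroup M] :
    ∀ (N : ℕ) (F : Fin (N + 1) → M),
      ∏ x : Fin N, F x.castSucc / F x.succ = F 0 / F (Fin.last N) := by
  intro N
  induction N with
  | zero => simp
  | succ n ih =>
    intro F
    rw [Fin.prod_univ_castSucc]
    have : ∀ x : Fin n, F x.castSucc.castSucc / F x.castSucc.succ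
        = (F ∘ Fin.castSucc) x.castSucc / (F ∘ Fin.castSucc) x.succ := by
      intro x
      simp [Fin.succ_castSucc, -Fin.castSucc_succ]
    simp only [this]
    rw [ih (F ∘ Fin.castSucc)]
    simp only [Function.comp]
    rw [div_mul_div_cancel]
    rfl

/-- `U(g)U(h)U(gh)⁻¹` is diagonal: `U(g)U(h)` differs from `U(gh)` by the diagonal
phase `∏_{x} ω(l_x,g,h)/ω(l_{x+1},g,h) = ω(l_first,g,h)/ω(l_last,g,h)` (telescoping). -/
theorem stmt17 {G : Type*} [Group G] [Fintype G] (ω : G → G → G → Circle)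
    (hω : IsCocycle ω)
    (hnorm : ∀ g h k : G, g = 1 ∨ h = 1 ∨ k = 1 → ω g h k = 1)
    (N : ℕ) (g h : G) (f : (Fin (N + 1) → G) → ℂ) (l : Fin (N + 1) → G) :
    truncatedAction ω N g (truncatedAction ω N h f) l
      = (((ω (l 0) g h : Circle) : ℂ) / ((ω (l (Fin.last N)) g h : Circle) : ℂ)) *
          truncatedAction ω N (g * h) f l := by
  simp only [truncatedAction]
  have key : ∀ x : Fin N,
      ω (l x.castSucc * (l x.succ)⁻¹) (l x.succ) g *
        ω (l x.castSucc * g * (l x.succ * g)⁻¹) (l x.succ * g) h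
      = (ω (l x.castSucc) g h / ω (l x.succ) g h) *
        ω (l x.castSucc * (l x.succ)⁻¹) (l x.succ) (g * h) := by
    intro x
    have hc := hω (l x.castSucc * (l x.succ)⁻¹) (l x.succ) g h
    have e1 : l x.castSucc * (l x.succ)⁻¹ * l x.succ = l x.castSucc := by group
    have e2 : l x.castSucc * g * (l x.succ * g)⁻¹ = l x.castSucc * (l x.succ)⁻¹ := by group
    rw [e1] at hc
    rw [e2, div_mul_eq_mul_div, eq_comm, div_eq_iff_eq_mul, ← hc]
    ac_rfl
  have main : (∏ x : Fin N,
        (ω (l x.castSucc * (l x.succ)⁻¹) (l x.succ) g *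
          ω (l x.castSucc * g * (l x.succ * g)⁻¹) (l x.succ * g) h))
      = (ω (l 0) g h / ω (l (Fin.last N)) g h) *
          ∏ x : Fin N, ω (l x.castSucc * (l x.succ)⁻¹) (l x.succ) (g * h) := by
    simp only [key, Finset.prod_mul_distrib]
    rw [telescope N (fun x => ω (l x) g h)]
  have harg : (fun x => l x * g * h) = fun x => l x * (g * h) := by
    funext x; rw [mul_assoc]
  calc (∏ x : Fin N, ((ω (l x.castSucc * (l x.succ)⁻¹) (l x.succ) g : Circle) : ℂ)) *
        ((∏ x : Fin N, ((ω ((l x.castSucc * g) * ((l x.succ * g))⁻¹) (l x.succ * g) h : Circle) : ℂ)) *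
          f fun x => l x * g * h)
      = (((∏ x : Fin N, (ω (l x.castSucc * (l x.succ)⁻¹) (l x.succ) g *
            ω (l x.castSucc * g * (l x.succ * g)⁻¹) (l x.succ * g) h : Circle)) : ℂ)) *
          f fun x => l x * g * h := by
        push_cast [Finset.prod_mul_distrib]
        ring
    _ = _ := by
        have coe_prod : ∀ {n : ℕ} (F : Fin n → Circle),
            ((∏ x, F x : Circle) : ℂ) = ∏ x, ((F x : Circle) : ℂ) := by
          intro n F
          exact map_prod Circle.coeHom F Finset.univ
        rw [harg, ← coe_prod, main]
        push_cast [coe_prod]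
        ring
end
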